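/- arXiv:1107.5022 — 6 statements merged into one kernel-verified Lean document; each statement's English description precedes it below -/
import Mathlib

section
/- If there exists a Q-set of size ω₁ (a set Q ⊆ 2^ω of cardinality ℵ₁ such that every subset of Q is a relative G_δ), then there exists a surjection F : 2^ω → 2^{ω₁} such that for every subbasic clopen set C ⊆ 2^{ω₁} (a set of the form {p : p(α) = i} for some α < ω₁ and i ∈ {0,1}), the preimage F⁻¹(C) is either a G_δ or an F_σ subset of 2^ω. -/
open Cardinal Set

abbrev CantorSp : Type := ℕ → Bool
abbrev W1 : Type := (Cardinal.aleph 1).ord.ToType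
abbrev Big : Type := W1 → Bool

/-- An Fσ set: a countable union of closed sets. -/
def IsFsigma {X : Type} [TopologicalSpace X] (S : Set X) : Prop :=
  ∃ f : ℕ → Set X, (∀ n, IsClosed (f n)) ∧ S = ⋃ n, f n

/- auxiliary development -/

lemma isGδ_preimage {X Y : Type} [TopologicalSpace X] [TopologicalSpace Y]
    {f : X → Y} (hf : Continuous f) {s : Set Y} (hs : IsGδ s) : IsGδ (f ⁻¹' s) := by
  obtain ⟨g, hg, rfl⟩ := hs.eq_iInter_nat
  rw [preimage_iInter]
  exact .iInter_of_isOpen fun n => (hg n).preimage hf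

lemma isFsigma_compl_of_isGδ {X : Type} [TopologicalSpace X] {s : Set X} (hs : IsGδ s) :
    IsFsigma sᶜ := by
  obtain ⟨g, hg, rfl⟩ := hs.eq_iInter_nat
  exact ⟨fun n => (g n)ᶜ, fun n => (hg n).isClosed_compl, by rw [compl_iInter]⟩

/-- cylinder determined by a finite list -/
def cyl (s : List Bool) : Set CantorSp := {y | ∀ i < s.length, y i = s.getD i false}

lemma isOpen_coord (k : ℕ) (b : Bool) : IsOpen {x : CantorSp | x k = b} := by
  have : {x : CantorSp | x k = b} = (fun x : CantorSp => x k) ⁻¹' {b} := rfl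
  rw [this]
  exact IsOpen.preimage (continuous_apply k) (isOpen_discrete _)

lemma isOpen_cyl (s : List Bool) : IsOpen (cyl s) := by
  have : cyl s = ⋂ i ∈ Finset.range s.length, {y : CantorSp | y i = s.getD i false} := by
    ext y; simp [cyl]
  rw [this]
  exact isOpen_biInter_finset fun i _ => isOpen_coord i _

lemma mem_cyl_self (y : CantorSp) (k : ℕ) : y ∈ cyl (List.ofFn fun i : Fin k => y i) := by
  intro i hi
  simp only [List.length_ofFn] at hi
  simp [List.getD_eq_getElem?_getD, List.getElem?_ofFn, hi]

lemma cyl_ofFn_subset {y : CantorSp} {k : ℕ} {z : CantorSp}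
    (hz : z ∈ cyl (List.ofFn fun i : Fin k => y i)) : ∀ i < k, z i = y i := by
  intro i hi
  have := hz i (by simpa using hi)
  simpa [List.getD_eq_getElem?_getD, List.getElem?_ofFn, hi] using this

/-- every open set contains a cylinder around each of its points -/
lemma exists_cyl_subset {V : Set CantorSp} (hV : IsOpen V) {y : CantorSp} (hy : y ∈ V) :
    ∃ s : List Bool, y ∈ cyl s ∧ cyl s ⊆ V := by
  have hnh : V ∈ nhds y := hV.mem_nhds hy
  rw [nhds_pi] at hnh
  obtain ⟨I, hIfin, t, ht, hsub⟩ := Filter.mem_pi.mp hnh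
  obtain ⟨k, hk⟩ := hIfin.bddAbove
  refine ⟨List.ofFn fun i : Fin (k + 1) => y i, mem_cyl_self y _, ?_⟩
  intro z hz
  apply hsub
  intro i hi
  have hik : i < k + 1 := Nat.lt_succ_of_le (hk hi)
  have : z i = y i := cyl_ofFn_subset hz i hik
  rw [this]
  have := ht i
  rwa [nhds_discrete, Filter.mem_pure] at this

/-- surjective enumeration of lists -/
noncomputable def LB : ℕ → List Bool := fun n => (Encodable.decode (α := List Bool) n).getD []

lemma LB_surj : Function.Surjective LB := fun s => ⟨Encodable.encode s, by simp [LB]⟩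

noncomputable def pr : ℕ × ℕ ≃ ℕ := Nat.pairEquiv

/-- the universal Gδ set -/
noncomputable def U : Set (CantorSp × CantorSp) :=
  ⋂ m, ⋃ n, {x : CantorSp | x (pr (m, n)) = true} ×ˢ cyl (LB n)

lemma mem_U {x y : CantorSp} :
    (x, y) ∈ U ↔ ∀ m, ∃ n, x (pr (m, n)) = true ∧ y ∈ cyl (LB n) := by
  simp [U, Set.mem_iInter, Set.mem_iUnion]

lemma isGδ_U : IsGδ U := by
  exact .iInter_of_isOpen fun m => isOpen_iUnion fun n =>
    IsOpen.prod (isOpen_coord _ true) (isOpen_cyl _)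

/-- universality: every Gδ set is a section of U -/
lemma U_universal {G : Set CantorSp} (hG : IsGδ G) :
    ∃ x : CantorSp, ∀ y, ((x, y) ∈ U ↔ y ∈ G) := by
  classical
  obtain ⟨f, hf, rfl⟩ := hG.eq_iInter_nat
  refine ⟨fun k => decide (cyl (LB (pr.symm k).2) ⊆ f (pr.symm k).1), fun y => ?_⟩
  rw [mem_U, Set.mem_iInter]
  constructor
  · intro h m
    obtain ⟨n, hxn, hyn⟩ := h m
    simp only [Equiv.symm_apply_apply, decide_eq_true_eq] at hxn
    exact hxn hyn
  · intro h m
    obtain ⟨s, hys, hsV⟩ := exists_cyl_subset (hf m) (h m)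
    obtain ⟨n, rfl⟩ := LB_surj s
    exact ⟨n, by simpa using hsV, hys⟩

/-- If there is a Q-set of size ℵ₁, then there is a surjection `F : 2^ω → 2^{ω₁}` such that the
preimage of every subbasic clopen set `{p | p α = i}` is Gδ or Fσ. -/
theorem qset_gives_surjection
    (hQ : ∃ Q : Set CantorSp, #Q = Cardinal.aleph 1 ∧
      ∀ X ⊆ Q, ∃ G : Set CantorSp, IsGδ G ∧ G ∩ Q = X) :
    ∃ F : CantorSp → Big, Function.Surjective F ∧
      ∀ (a : W1) (i : Bool),
        IsGδ (F ⁻¹' {p : Big | p a = i}) ∨ IsFsigma (F ⁻¹' {p : Big | p a = i}) := by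
  classical
  obtain ⟨Q, hQcard, hQset⟩ := hQ
  have hW1 : #W1 = Cardinal.aleph 1 := by
    rw [mk_toType, Cardinal.card_ord]
  have : Nonempty (W1 ≃ Q) := Cardinal.eq.mp (hW1.trans hQcard.symm)
  obtain ⟨g⟩ := this
  set F : CantorSp → Big := fun x a => decide ((x, (g a : CantorSp)) ∈ U) with hF
  have hpre : ∀ a : W1, F ⁻¹' {p : Big | p a = true} = {x | (x, (g a : CantorSp)) ∈ U} := by
    intro a; ext x; simp [hF]
  have hGδ : ∀ a : W1, IsGδ (F ⁻¹' {p : Big | p a = true}) := by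
    intro a
    rw [hpre a]
    exact isGδ_preimage (continuous_id.prodMk continuous_const) isGδ_U
  refine ⟨F, ?_, ?_⟩
  · intro p
    set X : Set CantorSp := Subtype.val '' (g '' {a | p a = true}) with hX
    have hXQ : X ⊆ Q := by rintro _ ⟨⟨z, hz⟩, _, rfl⟩; exact hz
    obtain ⟨G, hGδ', hGQ⟩ := hQset X hXQ
    obtain ⟨x, hx⟩ := U_universal hGδ'
    refine ⟨x, funext fun a => ?_⟩
    have hmem : ((x, (g a : CantorSp)) ∈ U) ↔ p a = true := by
      rw [hx]
      constructor
      · intro hG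
        have : (g a : CantorSp) ∈ X := by
          rw [← hGQ]; exact ⟨hG, (g a).2⟩
        obtain ⟨b, hb, hba⟩ := this
        obtain ⟨c, hc, rfl⟩ := hb
        have : c = a := g.injective (Subtype.val_injective hba)
        rwa [← this]
      · intro hpa
        have : (g a : CantorSp) ∈ X := ⟨g a, ⟨a, hpa, rfl⟩, rfl⟩
        rw [← hGQ] at this
        exact this.1
    simp only [hF]
    cases hpa : p a
    · simp only [decide_eq_false_iff_not]
      intro hmem'
      rw [hmem.mp hmem'] at hpa; exact Bool.noConfusion hpa
    · simp [hmem.mpr hpa]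
  · intro a i
    cases i
    · right
      have : F ⁻¹' {p : Big | p a = false} = (F ⁻¹' {p : Big | p a = true})ᶜ := by
        ext x; simp
      rw [this]
      exact isFsigma_compl_of_isGδ (hGδ a)
    · exact Or.inl (hGδ a)
end

section
/- For every ordinal α with 0 < α < ω₂ there exists a set U ⊆ 2^{ω₁} × 2^ω which is Σ*(α) (in the ω₁-Borel hierarchy of the product, generated from clopen boxes) and universal for Σ*(α) subsets of 2^ω: for every Q ⊆ 2^ω in Σ*(α) there exists p ∈ 2^{ω₁} with U_p = {x : (p,x) ∈ U} = Q. Dually, there is a universal Π*(α) set. -/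
open Cardinal Set

/-- The pair (Σ*(α), Π*(α)) of classes of the ι-indexed Borel hierarchy on X:
level 0 is the clopen sets, Σ*(α) consists of ι-indexed unions of sets from Π*(β), β < α,
and Π*(α) consists of ι-indexed intersections of sets from Σ*(β), β < α. -/
noncomputable def SigPi (X : Type) [TopologicalSpace X] (ι : Type) :
    Ordinal → Set (Set X) × Set (Set X) :=
  WellFounded.fix (wellFounded_lt (α := Ordinal)) fun α ih =>
    if α = 0 then ({S | IsClopen S}, {S | IsClopen S})
    else
      ({S | ∃ A : ι → Set X, (∀ i, ∃ β, ∃ h : β < α, A i ∈ (ih β h).2) ∧ S = ⋃ i, A i},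
       {S | ∃ A : ι → Set X, (∀ i, ∃ β, ∃ h : β < α, A i ∈ (ih β h).1) ∧ S = ⋂ i, A i})

noncomputable def SigmaStar (X : Type) [TopologicalSpace X] (ι : Type) (α : Ordinal) :
    Set (Set X) := (SigPi X ι α).1

noncomputable def PiStar (X : Type) [TopologicalSpace X] (ι : Type) (α : Ordinal) :
    Set (Set X) := (SigPi X ι α).2


/-! ### Auxiliary infrastructure -/

section Aux

lemma mk_W1 : #W1 = aleph 1 := mk_ord_toType _

instance : Infinite W1 := by rw [Cardinal.infinite_iff, mk_W1]; exact aleph0_le_aleph 1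

lemma exists_pair_equiv : Nonempty (W1 ≃ W1 × W1) := by
  apply Cardinal.eq.1
  simp only [Cardinal.mk_prod, Cardinal.lift_id, mk_W1]
  rw [Cardinal.mul_eq_self (aleph0_le_aleph 1)]

lemma exists_code_equiv : Nonempty (Bool × W1 × W1 ≃ W1) := by
  apply Cardinal.eq.1
  simp only [Cardinal.mk_prod, Cardinal.mk_bool, Cardinal.lift_id, mk_W1]
  have h1 : (ℵ_ 1) * (ℵ_ 1) = ℵ_ 1 := Cardinal.mul_eq_self (aleph0_le_aleph 1)
  have h2 : (2 : Cardinal) * (ℵ_ 1) = ℵ_ 1 :=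
    Cardinal.mul_eq_right (aleph0_le_aleph 1)
      ((nat_lt_aleph0 2).le.trans (aleph0_le_aleph 1)) (by norm_num)
  rw [h1, h2]

lemma exists_surj_W1 {T : Type u} [Nonempty T] (h : #T ≤ Cardinal.lift.{u} #W1) :
    ∃ s : W1 → T, Function.Surjective s := by
  have h2 : #T ≤ #(ULift.{u} W1) := by rwa [Cardinal.mk_uLift]
  obtain ⟨f⟩ := Cardinal.le_def _ _ |>.1 h2
  refine ⟨fun w => Function.invFun f ⟨w⟩, fun t => ?_⟩
  obtain ⟨w, hw⟩ := Function.invFun_surjective f.injective t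
  exact ⟨w.down, hw⟩

noncomputable def Cyl (l : List Bool) : Set CantorSp :=
  PiNat.cylinder (fun i => l.getD i false) l.length

noncomputable def CylO : Option (List Bool) → Set CantorSp
  | none => ∅
  | some l => Cyl l

lemma isClopen_cylinder (x : CantorSp) (n : ℕ) : IsClopen (PiNat.cylinder x n) := by
  rw [PiNat.cylinder_eq_pi]
  exact ⟨isClosed_set_pi (fun i _ => isClosed_discrete _),
    isOpen_set_pi (Finset.range n).finite_toSet (fun i _ => isOpen_discrete _)⟩

lemma isClopen_CylO (o : Option (List Bool)) : IsClopen (CylO o) := by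
  cases o with
  | none => exact isClopen_empty
  | some l => exact isClopen_cylinder _ _

lemma cyl_ofFn (y : CantorSp) (n : ℕ) :
    Cyl (List.ofFn fun i : Fin n => y i) = PiNat.cylinder y n := by
  have hlen : (List.ofFn fun i : Fin n => y i).length = n := List.length_ofFn
  ext z
  simp only [Cyl, PiNat.mem_cylinder_iff, hlen]
  constructor
  · intro h i hi
    rw [h i hi, List.getD_eq_getElem _ _ (by omega), List.getElem_ofFn]
  · intro h i hi
    rw [h i hi, List.getD_eq_getElem _ _ (by omega), List.getElem_ofFn]

lemma exists_cyl_subset_s4 {S : Set CantorSp} (hS : IsOpen S) {x : CantorSp} (hx : x ∈ S) :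
    ∃ l : List Bool, x ∈ Cyl l ∧ Cyl l ⊆ S := by
  obtain ⟨t, ⟨y, n, rfl⟩, hxt, hts⟩ :=
    (PiNat.isTopologicalBasis_cylinders (fun _ : ℕ => Bool)).exists_subset_of_mem_open hx hS
  exact ⟨List.ofFn fun i : Fin n => y i, by rw [cyl_ofFn]; exact hxt, by rw [cyl_ofFn]; exact hts⟩

end Aux

/-! ### Basic lemmas on the hierarchy -/

section Hierarchy

variable {X Y : Type} [TopologicalSpace X] [TopologicalSpace Y] {ι : Type}

lemma sigPi_eq (X : Type) [TopologicalSpace X] (ι : Type) (α : Ordinal) :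
    SigPi X ι α =
      if α = 0 then ({S | IsClopen S}, {S | IsClopen S})
      else
        ({S | ∃ A : ι → Set X, (∀ i, ∃ β, ∃ _ : β < α, A i ∈ PiStar X ι β) ∧ S = ⋃ i, A i},
         {S | ∃ A : ι → Set X, (∀ i, ∃ β, ∃ _ : β < α, A i ∈ SigmaStar X ι β) ∧ S = ⋂ i, A i}) :=
  WellFounded.fix_eq _ _ _

lemma sigmaStar_zero : SigmaStar X ι 0 = {S | IsClopen S} := by
  rw [SigmaStar, sigPi_eq, if_pos rfl]

lemma piStar_zero : PiStar X ι 0 = {S | IsClopen S} := by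
  rw [PiStar, sigPi_eq, if_pos rfl]

lemma mem_sigmaStar_pos {α : Ordinal} (hα : α ≠ 0) {S : Set X} :
    S ∈ SigmaStar X ι α ↔
      ∃ A : ι → Set X, (∀ i, ∃ β, β < α ∧ A i ∈ PiStar X ι β) ∧ S = ⋃ i, A i := by
  rw [SigmaStar, sigPi_eq, if_neg hα]
  simp only [mem_setOf_eq, exists_prop]

lemma mem_piStar_pos {α : Ordinal} (hα : α ≠ 0) {S : Set X} :
    S ∈ PiStar X ι α ↔
      ∃ A : ι → Set X, (∀ i, ∃ β, β < α ∧ A i ∈ SigmaStar X ι β) ∧ S = ⋂ i, A i := by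
  rw [PiStar, sigPi_eq, if_neg hα]
  simp only [mem_setOf_eq, exists_prop]

lemma isClopen_mem [Nonempty ι] {S : Set X} (hS : IsClopen S) (α : Ordinal) :
    S ∈ SigmaStar X ι α ∧ S ∈ PiStar X ι α := by
  induction α using Ordinal.induction with
  | h α IH =>
    rcases eq_or_ne α 0 with rfl | hα
    · exact ⟨by rw [sigmaStar_zero]; exact hS, by rw [piStar_zero]; exact hS⟩
    · have h0 : (0 : Ordinal) < α := pos_iff_ne_zero.2 hα
      constructor
      · rw [mem_sigmaStar_pos hα]
        exact ⟨fun _ => S, fun _ => ⟨0, h0, by rw [piStar_zero]; exact hS⟩,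
          (iUnion_const S).symm⟩
      · rw [mem_piStar_pos hα]
        exact ⟨fun _ => S, fun _ => ⟨0, h0, by rw [sigmaStar_zero]; exact hS⟩,
          (iInter_const S).symm⟩

lemma compl_mem (α : Ordinal) (S : Set X) :
    (S ∈ SigmaStar X ι α → Sᶜ ∈ PiStar X ι α) ∧
    (S ∈ PiStar X ι α → Sᶜ ∈ SigmaStar X ι α) := by
  induction α using Ordinal.induction generalizing S with
  | h α IH =>
    rcases eq_or_ne α 0 with rfl | hα
    · rw [sigmaStar_zero, piStar_zero]
      exact ⟨fun h => h.compl, fun h => h.compl⟩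
    · constructor
      · rw [mem_sigmaStar_pos hα, mem_piStar_pos hα]
        rintro ⟨A, hA, rfl⟩
        refine ⟨fun i => (A i)ᶜ, fun i => ?_, by rw [compl_iUnion]⟩
        obtain ⟨β, hβ, hm⟩ := hA i
        exact ⟨β, hβ, (IH β hβ (A i)).2 hm⟩
      · rw [mem_sigmaStar_pos hα, mem_piStar_pos hα]
        rintro ⟨A, hA, rfl⟩
        refine ⟨fun i => (A i)ᶜ, fun i => ?_, by rw [compl_iInter]⟩
        obtain ⟨β, hβ, hm⟩ := hA i
        exact ⟨β, hβ, (IH β hβ (A i)).1 hm⟩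

lemma preimage_mem {f : X → Y} (hf : Continuous f) (α : Ordinal) (S : Set Y) :
    (S ∈ SigmaStar Y ι α → f ⁻¹' S ∈ SigmaStar X ι α) ∧
    (S ∈ PiStar Y ι α → f ⁻¹' S ∈ PiStar X ι α) := by
  induction α using Ordinal.induction generalizing S with
  | h α IH =>
    rcases eq_or_ne α 0 with rfl | hα
    · rw [sigmaStar_zero, piStar_zero, sigmaStar_zero (X := X), piStar_zero (X := X)]
      exact ⟨fun h => h.preimage hf, fun h => h.preimage hf⟩
    · constructor
      · rw [mem_sigmaStar_pos hα, mem_sigmaStar_pos hα]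
        rintro ⟨A, hA, rfl⟩
        refine ⟨fun i => f ⁻¹' A i, fun i => ?_, by rw [preimage_iUnion]⟩
        obtain ⟨β, hβ, hm⟩ := hA i
        exact ⟨β, hβ, (IH β hβ (A i)).2 hm⟩
      · rw [mem_piStar_pos hα, mem_piStar_pos hα]
        rintro ⟨A, hA, rfl⟩
        refine ⟨fun i => f ⁻¹' A i, fun i => ?_, by rw [preimage_iInter]⟩
        obtain ⟨β, hβ, hm⟩ := hA i
        exact ⟨β, hβ, (IH β hβ (A i)).1 hm⟩

lemma inter_clopen_mem [Nonempty ι] {C : Set X} (hC : IsClopen C) (α : Ordinal) (S : Set X) :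
    (S ∈ SigmaStar X ι α → S ∩ C ∈ SigmaStar X ι α) ∧
    (S ∈ PiStar X ι α → S ∩ C ∈ PiStar X ι α) := by
  induction α using Ordinal.induction generalizing S with
  | h α IH =>
    rcases eq_or_ne α 0 with rfl | hα
    · rw [sigmaStar_zero, piStar_zero]
      exact ⟨fun h => h.inter hC, fun h => h.inter hC⟩
    · constructor
      · rw [mem_sigmaStar_pos hα, mem_sigmaStar_pos hα]
        rintro ⟨A, hA, rfl⟩
        refine ⟨fun i => A i ∩ C, fun i => ?_, by rw [iUnion_inter]⟩
        obtain ⟨β, hβ, hm⟩ := hA i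
        exact ⟨β, hβ, (IH β hβ (A i)).2 hm⟩
      · rw [mem_piStar_pos hα, mem_piStar_pos hα]
        rintro ⟨A, hA, rfl⟩
        refine ⟨fun i => A i ∩ C, fun i => ?_, by rw [iInter_inter]⟩
        obtain ⟨β, hβ, hm⟩ := hA i
        exact ⟨β, hβ, (IH β hβ (A i)).1 hm⟩

end Hierarchy

/-! ### The universal `Σ*(α)` set -/

lemma univSigma : ∀ α : Ordinal.{u}, 0 < α → α < (Cardinal.aleph 2).ord →
    ∃ U ∈ SigmaStar (Big × CantorSp) W1 α,
      ∀ Q ∈ SigmaStar CantorSp W1 α, ∃ p : Big, {x : CantorSp | (p, x) ∈ U} = Q := by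
  intro α
  induction α using Ordinal.induction with
  | h α IH =>
  intro h0 h2
  classical
  obtain ⟨P⟩ := exists_pair_equiv
  rcases eq_or_ne α 1 with rfl | hα1
  · -- the case `α = 1`
    obtain ⟨s₁, hs₁⟩ : ∃ s : W1 → Option (List Bool), Function.Surjective s := by
      apply exists_surj_W1
      rw [Cardinal.lift_id, mk_W1]
      exact Cardinal.mk_le_aleph0.trans (aleph0_le_aleph 1)
    refine ⟨⋃ k : W1,
      ({q : Big × CantorSp | q.1 k = true} ∩ Prod.snd ⁻¹' CylO (s₁ (P k).2)), ?_, ?_⟩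
    · rw [mem_sigmaStar_pos one_ne_zero]
      refine ⟨_, fun k => ⟨0, zero_lt_one, ?_⟩, rfl⟩
      rw [piStar_zero]
      exact ((isClopen_discrete {true}).preimage
        ((continuous_apply k).comp continuous_fst)).inter
        ((isClopen_CylO _).preimage continuous_snd)
    · intro Q hQ
      rw [mem_sigmaStar_pos one_ne_zero] at hQ
      obtain ⟨A, hA, rfl⟩ := hQ
      have hAclopen : ∀ i, IsClopen (A i) := by
        intro i
        obtain ⟨β, hβ, hm⟩ := hA i
        rw [Ordinal.lt_one_iff_zero] at hβ
        subst hβ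
        rwa [piStar_zero] at hm
      refine ⟨fun k => decide (∃ l, s₁ (P k).2 = some l ∧ Cyl l ⊆ A (P k).1), ?_⟩
      ext x
      simp only [mem_setOf_eq, mem_iUnion, mem_inter_iff, mem_preimage]
      constructor
      · rintro ⟨k, hp, hx⟩
        rw [decide_eq_true_eq] at hp
        obtain ⟨l, hsl, hsub⟩ := hp
        rw [hsl] at hx
        exact ⟨(P k).1, hsub hx⟩
      · intro hx
        obtain ⟨i, hxi⟩ := hx
        obtain ⟨l, hxl, hsub⟩ := exists_cyl_subset_s4 (hAclopen i).isOpen hxi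
        obtain ⟨k₂, hk₂⟩ := hs₁ (some l)
        refine ⟨P.symm (i, k₂), ?_, ?_⟩
        · simp only [Equiv.apply_symm_apply, decide_eq_true_eq]
          exact ⟨l, hk₂, hsub⟩
        · simp only [Equiv.apply_symm_apply]
          rw [hk₂]
          exact hxl
  · -- the case `α > 1`
    have h1 : 1 < α := lt_of_le_of_ne (Order.one_le_iff_pos.2 h0) (Ne.symm hα1)
    obtain ⟨E⟩ := exists_code_equiv
    have hcardα : α.card ≤ aleph 1 := by
      have hlt := Cardinal.lt_ord.1 h2
      have h : aleph 2 = Order.succ (aleph 1) := by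
        rw [← Cardinal.aleph_succ]; norm_num
      rw [h, Order.lt_succ_iff] at hlt
      exact hlt
    have hTne : Nonempty {β : Ordinal // 0 < β ∧ β < α} := ⟨⟨1, zero_lt_one, h1⟩⟩
    obtain ⟨s, hs⟩ : ∃ s : W1 → {β : Ordinal // 0 < β ∧ β < α}, Function.Surjective s := by
      apply exists_surj_W1
      calc #{β : Ordinal.{u} // 0 < β ∧ β < α}
          ≤ #(Set.Iio α) := Cardinal.mk_le_mk_of_subset (fun β hβ => hβ.2)
        _ = Cardinal.lift.{u + 1} α.card := Ordinal.mk_Iio_ordinal α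
        _ ≤ Cardinal.lift.{u + 1} (aleph 1) := Cardinal.lift_le.2 hcardα
        _ = Cardinal.lift.{u + 1} #W1 := by
            simp [mk_W1, Cardinal.lift_aleph]
    have hUt : ∀ t : {β : Ordinal // 0 < β ∧ β < α},
        ∃ U ∈ SigmaStar (Big × CantorSp) W1 t.1,
          ∀ Q ∈ SigmaStar CantorSp W1 t.1, ∃ p : Big, {x : CantorSp | (p, x) ∈ U} = Q :=
      fun t => IH t.1 t.2.2 t.2.1 (t.2.2.trans h2)
    choose u hum huu using hUt
    set V : {β : Ordinal // 0 < β ∧ β < α} → Set (Big × CantorSp) := fun t => (u t)ᶜ with hV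
    have hVmem : ∀ t, V t ∈ PiStar (Big × CantorSp) W1 t.1 :=
      fun t => (compl_mem _ _).1 (hum t)
    have hVuniv : ∀ t, ∀ Q ∈ PiStar CantorSp W1 t.1,
        ∃ p : Big, {x : CantorSp | (p, x) ∈ V t} = Q := by
      intro t Q hQ
      obtain ⟨p, hp⟩ := huu t Qᶜ ((compl_mem _ _).2 hQ)
      refine ⟨p, ?_⟩
      have he : {x : CantorSp | (p, x) ∈ V t} = {x : CantorSp | (p, x) ∈ u t}ᶜ := rfl
      rw [he, hp, compl_compl]
    set blk : Big → W1 → Big := fun p j i => p (E (true, j, i)) with hblk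
    set g : W1 → Big × CantorSp → Big × CantorSp := fun j q => (blk q.1 j, q.2) with hg
    have hgc : ∀ j, Continuous (g j) :=
      fun j => Continuous.prodMk
        (continuous_pi fun i => (continuous_apply _).comp continuous_fst) continuous_snd
    refine ⟨⋃ j : W1, (g j ⁻¹' V (s (P j).2) ∩
      {q : Big × CantorSp | q.1 (E (false, j, j)) = true}), ?_, ?_⟩
    · rw [mem_sigmaStar_pos h0.ne']
      refine ⟨_, fun j => ⟨(s (P j).2).1, (s (P j).2).2.2, ?_⟩, rfl⟩
      refine (inter_clopen_mem ?_ _ _).2 ((preimage_mem (hgc j) _ _).2 (hVmem _))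
      exact (isClopen_discrete {true}).preimage ((continuous_apply _).comp continuous_fst)
    · intro Q hQ
      rw [mem_sigmaStar_pos h0.ne'] at hQ
      obtain ⟨A, hA, rfl⟩ := hQ
      have hA' : ∀ i, ∃ t : {β : Ordinal // 0 < β ∧ β < α}, A i ∈ PiStar CantorSp W1 t.1 := by
        intro i
        obtain ⟨β, hβ, hm⟩ := hA i
        rcases eq_or_ne β 0 with rfl | hβ0
        · rw [piStar_zero] at hm
          exact ⟨⟨1, zero_lt_one, h1⟩, (isClopen_mem hm 1).2⟩
        · exact ⟨⟨β, pos_iff_ne_zero.2 hβ0, hβ⟩, hm⟩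
      choose t ht using hA'
      choose q hq using fun i => hVuniv (t i) (A i) (ht i)
      choose r hr using fun i => hs (t i)
      set p : Big := fun w =>
        if (E.symm w).1 = true then q (P (E.symm w).2.1).1 (E.symm w).2.2
        else decide ((P (E.symm w).2.1).2 = r (P (E.symm w).2.1).1) with hpdef
      have hact : ∀ j : W1, p (E (false, j, j)) = true ↔ (P j).2 = r (P j).1 := by
        intro j
        simp only [hpdef, Equiv.symm_apply_apply]
        rw [if_neg (by simp)]
        simp only [decide_eq_true_eq]
      have hblkp : ∀ j : W1, blk p j = q (P j).1 := by
        intro j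
        funext i
        simp only [hblk, hpdef, Equiv.symm_apply_apply, if_true]
      refine ⟨p, ?_⟩
      ext x
      simp only [mem_setOf_eq, mem_iUnion, mem_inter_iff, mem_preimage]
      constructor
      · rintro ⟨j, hmem, hactj⟩
        rw [hact j] at hactj
        have hst : s (P j).2 = t (P j).1 := by rw [hactj, hr]
        have hx2 : (q (P j).1, x) ∈ V (t (P j).1) := by
          rw [← hst]
          have hge : g j (p, x) = (q (P j).1, x) := by
            simp only [hg, hblkp j]
          rwa [hge] at hmem
        exact ⟨(P j).1, by rw [← hq (P j).1]; exact hx2⟩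
      · rintro ⟨i, hxi⟩
        have e1 : P (P.symm (i, r i)) = (i, r i) := Equiv.apply_symm_apply _ _
        refine ⟨P.symm (i, r i), ?_, ?_⟩
        · have hge : g (P.symm (i, r i)) (p, x) = (q i, x) := by
            simp only [hg, hblkp, e1]
          rw [hge, e1]
          show (q i, x) ∈ V (s (r i))
          rw [hr i]
          rw [← hq i] at hxi
          exact hxi
        · rw [hact, e1]

/-- For every `0 < α < ω₂` there is a `Σ*(α)` subset of `2^{ω₁} × 2^ω` universal for `Σ*(α)`
subsets of `2^ω`, and dually a universal `Π*(α)` set. -/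
theorem universal_sets_exist (α : Ordinal) (h0 : 0 < α) (h2 : α < (Cardinal.aleph 2).ord) :
    (∃ U ∈ SigmaStar (Big × CantorSp) W1 α,
      ∀ Q ∈ SigmaStar CantorSp W1 α, ∃ p : Big, {x : CantorSp | (p, x) ∈ U} = Q) ∧
    (∃ U ∈ PiStar (Big × CantorSp) W1 α,
      ∀ Q ∈ PiStar CantorSp W1 α, ∃ p : Big, {x : CantorSp | (p, x) ∈ U} = Q) := by
  obtain ⟨U, hU, huniv⟩ := univSigma α h0 h2
  refine ⟨⟨U, hU, huniv⟩, Uᶜ, (compl_mem _ _).1 hU, ?_⟩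
  intro Q hQ
  obtain ⟨p, hp⟩ := huniv Qᶜ ((compl_mem _ _).2 hQ)
  refine ⟨p, ?_⟩
  have he : {x : CantorSp | (p, x) ∈ Uᶜ} = {x : CantorSp | (p, x) ∈ U}ᶜ := rfl
  rw [he, hp, compl_compl]
end

section
/- In the Steel forcing poset Q(α), the retagging lemma holds: if p₁, p₂ ∈ Q(α), β + 1 ≤ α, and p₁(β+1) = p₂(β+1), then for every q₁ ≤ p₁ there exists q₂ ≤ p₂ with q₁(β) = q₂(β). -/
open Cardinal Set

/-- Order on tags in `α ∪ {∞}` (`none` is `∞`): `TagLT a b` means `a < b`, where `∞ < ∞` holds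
and `γ < ∞` for every ordinal `γ`. -/
def TagLT : Option Ordinal → Option Ordinal → Prop
  | _, none => True
  | none, some _ => False
  | some x, some y => x < y

/-- A condition of Steel forcing `Q(α)`: a finite subtree `t` of `ω^{<ω}` together with a
rank-function tagging `h : t → α ∪ {∞}` (`none` codes `∞`; `h` is irrelevant off `t`). -/
structure SteelCond (α : Ordinal) where
  t : Finset (List ℕ)
  tree : ∀ s ∈ t, ∀ s' : List ℕ, s' <+: s → s' ∈ t
  h : List ℕ → Option Ordinal
  tag_lt : ∀ s ∈ t, ∀ γ : Ordinal, h s = some γ → γ < α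
  rank : ∀ s ∈ t, ∀ s' ∈ t, s' <+: s → s' ≠ s → TagLT (h s) (h s')

/-- `p` extends `q` in Steel forcing. -/
def SteelLE {α : Ordinal} (p q : SteelCond α) : Prop :=
  q.t ⊆ p.t ∧ ∀ s ∈ q.t, p.h s = q.h s

/-- `p(β)`: the condition `p` with every tag `≥ ω·β` replaced by `∞`, recorded as its
underlying data (tree together with the retagging, normalized to `none` off the tree). -/
noncomputable def SteelCond.cut {α : Ordinal} (p : SteelCond α) (β : Ordinal) :
    Finset (List ℕ) × (List ℕ → Option Ordinal) :=
  (p.t, fun s => if s ∈ p.t then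
      (p.h s).bind (fun γ => if γ < Ordinal.omega0 * β then some γ else none)
    else none)

/-! ### Auxiliary lemmas -/

lemma tagLT_none_right (x : Option Ordinal) : TagLT x none := by
  cases x <;> trivial

lemma not_tagLT_none_some (a : Ordinal) : ¬ TagLT none (some a) := fun h => h

lemma tagLT_some_some {a b : Ordinal} : TagLT (some a) (some b) ↔ a < b := Iff.rfl

/-- Truncation of a tag below `c`. -/
noncomputable def tagCut (c : Ordinal) (x : Option Ordinal) : Option Ordinal :=
  x.bind (fun γ => if γ < c then some γ else none)

lemma tagCut_eq_none_iff {c : Ordinal} {x : Option Ordinal} :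
    tagCut c x = none ↔ ∀ γ, x = some γ → c ≤ γ := by
  cases x with
  | none => simp [tagCut]
  | some γ =>
    simp only [tagCut, Option.bind_some]
    constructor
    · intro h δ hδ
      cases hδ
      by_contra hlt
      rw [if_pos (lt_of_not_ge hlt)] at h
      cases h
    · intro h
      rw [if_neg (not_lt.2 (h γ rfl))]

lemma tagCut_eq_some_iff {c γ : Ordinal} {x : Option Ordinal} :
    tagCut c x = some γ ↔ x = some γ ∧ γ < c := by
  cases x with
  | none => simp [tagCut]
  | some δ =>
    simp only [tagCut, Option.bind_some]
    constructor
    · intro h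
      by_cases hδ : δ < c
      · rw [if_pos hδ] at h
        cases h; exact ⟨rfl, hδ⟩
      · rw [if_neg hδ] at h; cases h
    · rintro ⟨h1, h2⟩; cases h1; rw [if_pos h2]

lemma tagCut_tagCut {c d : Ordinal} (h : c ≤ d) (x : Option Ordinal) :
    tagCut c (tagCut d x) = tagCut c x := by
  cases x with
  | none => rfl
  | some γ =>
    simp only [tagCut, Option.bind_some]
    by_cases hd : γ < d
    · rw [if_pos hd, Option.bind_some]
    · rw [if_neg hd, Option.bind_none, if_neg (fun hc => hd (lt_of_lt_of_le hc h))]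

/-- The retagging lemma for Steel forcing: if `β + 1 ≤ α` and `p₁(β+1) = p₂(β+1)`, then every
`q₁ ≤ p₁` admits `q₂ ≤ p₂` with `q₁(β) = q₂(β)`. -/
theorem steel_retagging (α β : Ordinal) (hβ : β + 1 ≤ α) (p₁ p₂ : SteelCond α)
    (hpp : p₁.cut (β + 1) = p₂.cut (β + 1)) (q₁ : SteelCond α) (hq₁ : SteelLE q₁ p₁) :
    ∃ q₂ : SteelCond α, SteelLE q₂ p₂ ∧ q₁.cut β = q₂.cut β := by
  classical
  set ωβ : Ordinal := Ordinal.omega0 * β with hωβ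
  set ωβ1 : Ordinal := Ordinal.omega0 * (β + 1) with hωβ1
  have hsplit : ωβ1 = ωβ + Ordinal.omega0 := by rw [hωβ1, hωβ, mul_add, mul_one]
  have hββ1 : ωβ ≤ ωβ1 := by rw [hsplit]; exact le_self_add
  have hT : p₁.t = p₂.t := congrArg Prod.fst hpp
  have hTsub : p₁.t ⊆ q₁.t := hq₁.1
  have hagree : ∀ s ∈ p₁.t, q₁.h s = p₁.h s := hq₁.2
  have key : ∀ s ∈ p₁.t, tagCut ωβ1 (p₁.h s) = tagCut ωβ1 (p₂.h s) := by
    intro s hs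
    have h2 := congrFun (congrArg Prod.snd hpp) s
    simp only [SteelCond.cut] at h2
    rw [if_pos hs, if_pos (hT ▸ hs)] at h2
    exact h2
  have keyβ : ∀ s ∈ p₁.t, tagCut ωβ (p₁.h s) = tagCut ωβ (p₂.h s) := by
    intro s hs
    rw [← tagCut_tagCut hββ1 (p₁.h s), key s hs, tagCut_tagCut hββ1]
  have keysome : ∀ s ∈ p₁.t, ∀ γ, γ < ωβ1 → (p₁.h s = some γ ↔ p₂.h s = some γ) := by
    intro s hs γ hγ
    constructor
    · intro h
      have : tagCut ωβ1 (p₂.h s) = some γ := by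
        rw [← key s hs]; exact tagCut_eq_some_iff.2 ⟨h, hγ⟩
      exact (tagCut_eq_some_iff.1 this).1
    · intro h
      have : tagCut ωβ1 (p₁.h s) = some γ := by
        rw [key s hs]; exact tagCut_eq_some_iff.2 ⟨h, hγ⟩
      exact (tagCut_eq_some_iff.1 this).1
  have keybig : ∀ s ∈ p₁.t, (∀ γ, p₁.h s = some γ → ωβ1 ≤ γ) →
      (∀ γ, p₂.h s = some γ → ωβ1 ≤ γ) := by
    intro s hs h
    rw [← tagCut_eq_none_iff, ← key s hs, tagCut_eq_none_iff]
    exact h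
  -- numerical data
  set N : ℕ := q₁.t.sup List.length with hN
  set Γ : Ordinal := q₁.t.sup (fun s => (tagCut ωβ1 (q₁.h s)).getD 0) with hΓ
  set G : Ordinal := max ωβ (Γ + 1) with hG
  have hG0 : ωβ ≤ G := le_max_left _ _
  have hωβ1pos : (0 : Ordinal) < ωβ1 := by
    rw [hsplit]
    exact lt_of_lt_of_le Ordinal.omega0_pos (le_add_of_nonneg_left zero_le)
  have hΓlt : Γ < ωβ1 := by
    rw [hΓ]
    apply Finset.sup_lt_iff hωβ1pos |>.2
    intro s hs
    rcases hx : tagCut ωβ1 (q₁.h s) with _ | γ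
    · simpa using hωβ1pos
    · have := (tagCut_eq_some_iff.1 hx).2
      simpa using this
  have hGlt : G < ωβ1 := by
    rw [hG]
    apply max_lt
    · rw [hsplit]
      exact lt_add_of_pos_right _ Ordinal.omega0_pos
    · have hlim : Order.IsSuccLimit ωβ1 := by
        rw [hsplit]; exact Ordinal.isSuccLimit_add _ Ordinal.isSuccLimit_omega0
      rw [Ordinal.add_one_eq_succ]
      exact hlim.succ_lt hΓlt
  have hGfin : ∀ k : ℕ, G + (k : Ordinal) < ωβ1 := by
    intro k
    have h1 : G - ωβ < Ordinal.omega0 :=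
      Ordinal.sub_lt_of_lt_add (hsplit ▸ hGlt) Ordinal.omega0_pos
    obtain ⟨m, hm⟩ := Ordinal.lt_omega0.1 h1
    have : G + (k : Ordinal) = ωβ + ((G - ωβ) + (k : Ordinal)) := by
      rw [← add_assoc, Ordinal.add_sub_cancel_of_le hG0]
    rw [this, hsplit]
    apply (add_lt_add_iff_left _).2
    rw [hm, ← Nat.cast_add]
    exact Ordinal.nat_lt_omega0 _
  have hkeptG : ∀ s ∈ q₁.t, ∀ γ, q₁.h s = some γ → γ < ωβ1 → γ < G := by
    intro s hs γ hγ hlt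
    have h1 : (tagCut ωβ1 (q₁.h s)).getD 0 = γ := by
      rw [tagCut_eq_some_iff.2 ⟨hγ, hlt⟩]; rfl
    have h2 : γ ≤ Γ := h1 ▸ Finset.le_sup (f := fun s => (tagCut ωβ1 (q₁.h s)).getD 0) hs
    exact lt_of_le_of_lt h2 (lt_of_lt_of_le (lt_add_one Γ) (le_max_right _ _))
  have hlen : ∀ s ∈ q₁.t, s.length ≤ N := fun s hs => Finset.le_sup hs
  -- ancestors in T of a "big" node off T are big in p₂
  have hBigAnc : ∀ s ∈ q₁.t, s ∉ p₁.t → (∀ γ, q₁.h s = some γ → ωβ1 ≤ γ) →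
      ∀ s' ∈ p₁.t, s' <+: s → ∀ δ, p₂.h s' = some δ → ωβ1 ≤ δ := by
    intro s hs hsT hbig s' hs'T hpre
    have hne : s' ≠ s := fun h => hsT (h ▸ hs'T)
    have htl := q₁.rank s hs s' (hTsub hs'T) hpre hne
    apply keybig s' hs'T
    intro δ hδ
    rw [← hagree s' hs'T] at hδ
    rw [hδ] at htl
    rcases hq : q₁.h s with _ | γ
    · rw [hq] at htl; exact absurd htl (not_tagLT_none_some δ)
    · rw [hq] at htl
      exact le_of_lt (lt_of_le_of_lt (hbig γ hq) htl)
  -- the new tagging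
  set Blocked : List ℕ → Prop := fun s => ∃ s' ∈ p₁.t, s' <+: s ∧ p₂.h s' ≠ none with hBl
  set h₂ : List ℕ → Option Ordinal := fun s =>
    if s ∈ p₁.t then p₂.h s
    else if s ∈ q₁.t then
      (if ∃ γ, q₁.h s = some γ ∧ γ < ωβ1 then q₁.h s
       else if Blocked s then some (G + ((N - s.length : ℕ) : Ordinal)) else none)
    else none with hh₂
  have hbig_of_not_kept : ∀ s, (¬ ∃ γ, q₁.h s = some γ ∧ γ < ωβ1) →
      ∀ γ, q₁.h s = some γ → ωβ1 ≤ γ := by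
    intro s hk γ hγ
    by_contra hlt
    exact hk ⟨γ, hγ, lt_of_not_ge hlt⟩
  -- the four shapes of h₂
  have h₂T : ∀ s ∈ p₁.t, h₂ s = p₂.h s := by
    intro s hs; rw [hh₂]; exact if_pos hs
  have h₂kept : ∀ s ∈ q₁.t, s ∉ p₁.t → (∃ γ, q₁.h s = some γ ∧ γ < ωβ1) → h₂ s = q₁.h s := by
    intro s hs hsT hk; rw [hh₂]; simp only
    rw [if_neg hsT, if_pos hs, if_pos hk]
  have h₂bl : ∀ s ∈ q₁.t, s ∉ p₁.t → (¬ ∃ γ, q₁.h s = some γ ∧ γ < ωβ1) → Blocked s →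
      h₂ s = some (G + ((N - s.length : ℕ) : Ordinal)) := by
    intro s hs hsT hk hb; rw [hh₂]; simp only
    rw [if_neg hsT, if_pos hs, if_neg hk, if_pos hb]
  have h₂unbl : ∀ s ∈ q₁.t, s ∉ p₁.t → (¬ ∃ γ, q₁.h s = some γ ∧ γ < ωβ1) → ¬ Blocked s →
      h₂ s = none := by
    intro s hs hsT hk hb; rw [hh₂]; simp only
    rw [if_neg hsT, if_pos hs, if_neg hk, if_neg hb]
  -- tag_lt for the new condition
  have htag : ∀ s ∈ q₁.t, ∀ γ : Ordinal, h₂ s = some γ → γ < α := by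
    intro s hs γ heq
    by_cases hsT : s ∈ p₁.t
    · rw [h₂T s hsT] at heq
      exact p₂.tag_lt s (hT ▸ hsT) γ heq
    · by_cases hk : ∃ γ', q₁.h s = some γ' ∧ γ' < ωβ1
      · rw [h₂kept s hs hsT hk] at heq
        exact q₁.tag_lt s hs γ heq
      · by_cases hb : Blocked s
        · rw [h₂bl s hs hsT hk hb] at heq
          obtain ⟨s', hs'T, hpre, hne⟩ := hb
          obtain ⟨δ, hδ⟩ := Option.ne_none_iff_exists'.1 hne
          have hδbig : ωβ1 ≤ δ :=
            hBigAnc s hs hsT (hbig_of_not_kept s hk) s' hs'T hpre δ hδ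
          have hγ : γ = G + ((N - s.length : ℕ) : Ordinal) := (Option.some.inj heq).symm
          calc γ < ωβ1 := hγ ▸ hGfin _
            _ ≤ δ := hδbig
            _ < α := p₂.tag_lt s' (hT ▸ hs'T) δ hδ
        · rw [h₂unbl s hs hsT hk hb] at heq
          cases heq
  -- rank for the new condition
  have hrank : ∀ s ∈ q₁.t, ∀ s' ∈ q₁.t, s' <+: s → s' ≠ s → TagLT (h₂ s) (h₂ s') := by
    intro s hs s' hs' hpre hne
    by_cases hsT : s ∈ p₁.t
    · have hs'T : s' ∈ p₁.t := p₁.tree s hsT s' hpre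
      rw [h₂T s hsT, h₂T s' hs'T]
      exact p₂.rank s (hT ▸ hsT) s' (hT ▸ hs'T) hpre hne
    · by_cases hs'T : s' ∈ p₁.t
      · -- s off the base tree, s' in it
        rw [h₂T s' hs'T]
        by_cases hk : ∃ γ, q₁.h s = some γ ∧ γ < ωβ1
        · obtain ⟨γ, hγeq, hγlt⟩ := hk
          rw [h₂kept s hs hsT ⟨γ, hγeq, hγlt⟩, hγeq]
          rcases hp2 : p₂.h s' with _ | δ
          · exact tagLT_none_right _
          · rw [tagLT_some_some]
            by_cases hδ : δ < ωβ1
            · have hp1 : p₁.h s' = some δ := (keysome s' hs'T δ hδ).2 hp2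
              have htl := q₁.rank s hs s' (hTsub hs'T) hpre hne
              rw [hγeq, hagree s' hs'T, hp1] at htl
              exact htl
            · exact lt_of_lt_of_le hγlt (le_of_not_gt hδ)
        · by_cases hb : Blocked s
          · rw [h₂bl s hs hsT hk hb]
            rcases hp2 : p₂.h s' with _ | δ
            · exact tagLT_none_right _
            · rw [tagLT_some_some]
              have hδbig : ωβ1 ≤ δ :=
                hBigAnc s hs hsT (hbig_of_not_kept s hk) s' hs'T hpre δ hp2
              exact lt_of_lt_of_le (hGfin _) hδbig
          · rw [h₂unbl s hs hsT hk hb]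
            rcases hp2 : p₂.h s' with _ | δ
            · trivial
            · exact absurd ⟨s', hs'T, hpre, hp2 ▸ (Option.some_ne_none δ)⟩ hb
      · -- both off the base tree
        by_cases hk' : ∃ γ', q₁.h s' = some γ' ∧ γ' < ωβ1
        · obtain ⟨γ', hγ'eq, hγ'lt⟩ := hk'
          rw [h₂kept s' hs' hs'T ⟨γ', hγ'eq, hγ'lt⟩, hγ'eq]
          have htl := q₁.rank s hs s' hs' hpre hne
          rw [hγ'eq] at htl
          rcases hq : q₁.h s with _ | γ
          · rw [hq] at htl; exact absurd htl (not_tagLT_none_some γ')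
          · rw [hq] at htl
            have hk : ∃ γ₀, q₁.h s = some γ₀ ∧ γ₀ < ωβ1 := ⟨γ, hq, lt_trans htl hγ'lt⟩
            rw [h₂kept s hs hsT hk, hq]
            exact htl
        · by_cases hb' : Blocked s'
          · rw [h₂bl s' hs' hs'T hk' hb']
            by_cases hk : ∃ γ, q₁.h s = some γ ∧ γ < ωβ1
            · obtain ⟨γ, hγeq, hγlt⟩ := hk
              rw [h₂kept s hs hsT ⟨γ, hγeq, hγlt⟩, hγeq, tagLT_some_some]
              exact lt_of_lt_of_le (hkeptG s hs γ hγeq hγlt) (le_self_add)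
            · by_cases hb : Blocked s
              · rw [h₂bl s hs hsT hk hb, tagLT_some_some]
                apply (add_lt_add_iff_left _).2
                have hll : s'.length < s.length :=
                  lt_of_le_of_ne hpre.length_le (fun h => hne (hpre.eq_of_length h))
                have : N - s.length < N - s'.length :=
                  Nat.sub_lt_sub_left (lt_of_lt_of_le hll (hlen s hs)) hll
                exact_mod_cast this
              · obtain ⟨s₀, hs₀T, hpre₀, hne₀⟩ := hb'
                exact absurd ⟨s₀, hs₀T, hpre₀.trans hpre, hne₀⟩ hb
          · rw [h₂unbl s' hs' hs'T hk' hb']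
            exact tagLT_none_right _
  refine ⟨⟨q₁.t, q₁.tree, h₂, htag, hrank⟩, ⟨?_, ?_⟩, ?_⟩
  · rw [← hT]; exact hTsub
  · intro s hs
    exact h₂T s (hT ▸ hs)
  · -- the cut-β equality
    simp only [SteelCond.cut]
    refine Prod.ext rfl ?_
    funext s
    simp only
    by_cases hs : s ∈ q₁.t
    · rw [if_pos hs, if_pos hs]
      show tagCut ωβ (q₁.h s) = tagCut ωβ (h₂ s)
      by_cases hsT : s ∈ p₁.t
      · rw [h₂T s hsT, hagree s hsT]; exact keyβ s hsT
      · by_cases hk : ∃ γ, q₁.h s = some γ ∧ γ < ωβ1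
        · rw [h₂kept s hs hsT hk]
        · have hlhs : tagCut ωβ (q₁.h s) = none := by
            rw [tagCut_eq_none_iff]
            intro γ hγ
            exact le_trans hββ1 (hbig_of_not_kept s hk γ hγ)
          rw [hlhs]
          by_cases hb : Blocked s
          · rw [h₂bl s hs hsT hk hb]
            symm
            rw [tagCut_eq_none_iff]
            intro γ hγ
            cases hγ
            exact le_trans hG0 (le_self_add)
          · rw [h₂unbl s hs hsT hk hb]; rfl
    · rw [if_neg hs, if_neg hs]
end

section
/- In Steel forcing Q(α): for a condition p = (t_p, h_p) and σ ∈ ω^{<ω}, p forces σ ∈ T iff σ = ⟨⟩, or σ ∈ t_p, or the immediate predecessor τ of σ is in t_p with h_p(τ) > 0; and p forces σ ∉ T iff there exists an initial segment τ ⊆ σ with τ ∈ t_p and h_p(τ) < |σ| − |τ|. Consequently, both relations are determined by p(1), so if p(1) = q(1) then p and q force the same membership facts about clopen sets containing the generic tree T. -/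
open Cardinal Set

/-- `p ⊩ σ ∈ T`: densely below `p`, `σ` belongs to the finite tree of the condition. -/
def ForcesIn {α : Ordinal} (p : SteelCond α) (σ : List ℕ) : Prop :=
  ∀ q : SteelCond α, SteelLE q p → ∃ r : SteelCond α, SteelLE r q ∧ σ ∈ r.t

/-- `p ⊩ σ ∉ T`: no extension of `p` puts `σ` into its finite tree. -/
def ForcesOut {α : Ordinal} (p : SteelCond α) (σ : List ℕ) : Prop :=
  ∀ r : SteelCond α, SteelLE r p → σ ∉ r.t

lemma steelLE_refl {α : Ordinal} (p : SteelCond α) : SteelLE p p :=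
  ⟨subset_rfl, fun _ _ => rfl⟩

lemma steelLE_trans {α : Ordinal} {r q p : SteelCond α}
    (h1 : SteelLE r q) (h2 : SteelLE q p) : SteelLE r p :=
  ⟨fun s hs => h1.1 (h2.1 hs), fun s hs => (h1.2 s (h2.1 hs)).trans (h2.2 s hs)⟩

lemma tagLT_trans {a b c : Option Ordinal} (h1 : TagLT a b) (h2 : TagLT b c) : TagLT a c := by
  cases a <;> cases b <;> cases c <;> simp [TagLT] at * ; exact h1.trans h2

lemma prefix_dropLast_of_proper {σ s' : List ℕ} (h : s' <+: σ) (hne : s' ≠ σ) :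
    s' <+: σ.dropLast := by
  have hlt : s'.length < σ.length :=
    lt_of_le_of_ne h.length_le (fun e => hne (h.eq_of_length e))
  exact List.prefix_of_prefix_length_le h (List.dropLast_prefix σ)
    (by rw [List.length_dropLast]; omega)

lemma t_empty {α : Ordinal} {p : SteelCond α} (h : [] ∉ p.t) : p.t = ∅ :=
  Finset.eq_empty_of_forall_notMem (fun s hs => h (p.tree s hs [] List.nil_prefix))

def rootCond {α : Ordinal} (o : Option Ordinal) (h2 : ∀ γ, o = some γ → γ < α) :
    SteelCond α where
  t := {[]}
  tree := by
    intro s hs s' hs'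
    simp only [Finset.mem_singleton] at hs ⊢
    subst hs
    exact List.prefix_nil.mp hs'
  h := fun _ => o
  tag_lt := fun s _ γ hγ => h2 γ hγ
  rank := by
    intro s hs s' hs' _ hne
    simp only [Finset.mem_singleton] at hs hs'
    exact absurd (hs'.trans hs.symm) hne

lemma rootCond_le {α : Ordinal} {p : SteelCond α} (hp : p.t = ∅) (o : Option Ordinal)
    (h2 : ∀ γ, o = some γ → γ < α) : SteelLE (rootCond o h2) p := by
  constructor
  · rw [hp]; exact Finset.empty_subset _
  · intro s hs; rw [hp] at hs; exact absurd hs (Finset.notMem_empty s)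

lemma exists_insert {α : Ordinal} (q : SteelCond α) (σ : List ℕ) (o : Option Ordinal)
    (hσ : σ ∉ q.t) (hne : σ ≠ []) (hd : σ.dropLast ∈ q.t)
    (h1 : TagLT o (q.h σ.dropLast)) (h2 : ∀ γ, o = some γ → γ < α) :
    ∃ r : SteelCond α, SteelLE r q ∧ r.t = insert σ q.t ∧ r.h σ = o := by
  have hdne : σ.dropLast ≠ σ := fun e => by
    have := congrArg List.length e
    rw [List.length_dropLast] at this
    have : σ.length ≠ 0 := fun e0 => hne (List.length_eq_zero_iff.mp e0)
    omega
  refine ⟨⟨insert σ q.t, ?_, fun s => if s = σ then o else q.h s, ?_, ?_⟩, ?_, rfl, if_pos rfl⟩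
  · -- tree
    intro s hs s' hpre
    rcases Finset.mem_insert.mp hs with rfl | hs
    · by_cases hs' : s' = s
      · subst hs'; exact Finset.mem_insert_self _ _
      · exact Finset.mem_insert_of_mem
          (q.tree _ hd _ (prefix_dropLast_of_proper hpre hs'))
    · exact Finset.mem_insert_of_mem (q.tree s hs s' hpre)
  · -- tag_lt
    intro s hs γ hγ
    by_cases hsσ : s = σ
    · simp only [if_pos hsσ] at hγ; exact h2 γ hγ
    · simp only [if_neg hsσ] at hγ
      exact q.tag_lt s ((Finset.mem_insert.mp hs).resolve_left hsσ) γ hγ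
  · -- rank
    intro s hs s' hs' hpre hne'
    by_cases hsσ : s = σ
    · subst hsσ
      have hs'σ : s' ≠ s := hne'
      simp only [if_pos rfl, if_neg hs'σ]
      have hs'q : s' ∈ q.t := (Finset.mem_insert.mp hs').resolve_left hs'σ
      have hpre' : s' <+: s.dropLast := prefix_dropLast_of_proper hpre hne'
      by_cases hsd : s' = s.dropLast
      · rw [hsd]; exact h1
      · exact tagLT_trans h1 (q.rank s.dropLast hd s' hs'q hpre' hsd)
    · have hsq : s ∈ q.t := (Finset.mem_insert.mp hs).resolve_left hsσ
      by_cases hs'σ : s' = σ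
      · subst hs'σ
        exact absurd (q.tree s hsq s' hpre) hσ
      · simp only [if_neg hsσ, if_neg hs'σ]
        exact q.rank s hsq s' ((Finset.mem_insert.mp hs').resolve_left hs'σ) hpre hne'
  · -- SteelLE
    exact ⟨Finset.subset_insert _ _, fun s hs => if_neg (fun e => hσ (by rwa [e] at hs))⟩

lemma descent {α : Ordinal} (r : SteelCond α) (σ : List ℕ) (hσ : σ ∈ r.t) :
    ∀ τ ∈ r.t, τ <+: σ → ∀ γ : Ordinal, r.h τ = some γ →
      ∃ δ, r.h σ = some δ ∧ δ + ((σ.length - τ.length : ℕ) : Ordinal) ≤ γ := by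
  induction σ using List.reverseRecOn with
  | nil =>
    intro τ _ hpre γ hγ
    have : τ = [] := List.prefix_nil.mp hpre
    subst this
    exact ⟨γ, hγ, by simp⟩
  | append_singleton l a ih =>
    intro τ hτ hpre γ hγ
    by_cases hτσ : τ = l ++ [a]
    · subst hτσ
      exact ⟨γ, hγ, by simp⟩
    · have hpl : τ <+: l := by
        have := prefix_dropLast_of_proper hpre hτσ
        rwa [List.dropLast_concat] at this
      have hl : l ∈ r.t := r.tree _ hσ l (List.prefix_append l [a])
      obtain ⟨δ', hδ', hle'⟩ := ih hl τ hτ hpl γ hγ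
      have hrank := r.rank _ hσ l hl (List.prefix_append l [a]) (by simp)
      rw [hδ'] at hrank
      rcases hσv : r.h (l ++ [a]) with _ | δ
      · rw [hσv] at hrank; exact absurd hrank (by simp [TagLT])
      · rw [hσv] at hrank
        have hδδ' : δ < δ' := hrank
        refine ⟨δ, rfl, ?_⟩
        have hlen : (l ++ [a]).length - τ.length = 1 + (l.length - τ.length) := by
          have := hpl.length_le
          simp only [List.length_append, List.length_singleton]
          omega
        rw [hlen, Nat.cast_add, Nat.cast_one, ← add_assoc]
        calc δ + 1 + ((l.length - τ.length : ℕ) : Ordinal)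
            ≤ δ' + ((l.length - τ.length : ℕ) : Ordinal) :=
              add_le_add (Order.add_one_le_of_lt hδδ') le_rfl
          _ ≤ γ := hle'

lemma out_of_tag {α : Ordinal} (p : SteelCond α) (σ τ : List ℕ) (hτ : τ ∈ p.t)
    (hpre : τ <+: σ) (γ : Ordinal) (hγ : p.h τ = some γ)
    (hlt : γ < ((σ.length - τ.length : ℕ) : Ordinal)) : ForcesOut p σ := by
  intro r hr hσr
  have hτr : τ ∈ r.t := hr.1 hτ
  have hh : r.h τ = some γ := (hr.2 τ hτ).trans hγ
  obtain ⟨δ, _, hle⟩ := descent r σ hσr τ hτr hpre γ hh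
  exact absurd hlt (not_lt.mpr ((le_add_self : _ ≤ δ + _).trans hle))

lemma exists_mem_of_compat {α : Ordinal} (hα : 0 < α) (σ : List ℕ) :
    ∀ m : ℕ, ∀ p : SteelCond α,
    (∀ τ ∈ p.t, τ <+: σ → ∀ γ, p.h τ = some γ → ((σ.length - τ.length + m : ℕ) : Ordinal) ≤ γ) →
    ∃ r : SteelCond α, SteelLE r p ∧ σ ∈ r.t ∧ (∀ s ∈ r.t, s ∈ p.t ∨ s <+: σ) ∧
      (r.h σ = none ∨ ∃ γ, r.h σ = some γ ∧ (m : Ordinal) ≤ γ) := by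
  induction σ using List.reverseRecOn with
  | nil =>
    intro m p hc
    by_cases h0 : [] ∈ p.t
    · refine ⟨p, steelLE_refl p, h0, fun s hs => Or.inl hs, ?_⟩
      rcases hps : p.h [] with _ | γ
      · exact Or.inl rfl
      · refine Or.inr ⟨γ, rfl, ?_⟩
        have := hc [] h0 List.nil_prefix γ hps
        simpa using this
    · refine ⟨rootCond none (by rintro γ ⟨⟩), rootCond_le (t_empty h0) _ _, ?_, ?_, Or.inl rfl⟩
      · simp [rootCond]
      · intro s hs
        simp only [rootCond, Finset.mem_singleton] at hs
        exact Or.inr (hs ▸ List.nil_prefix)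
  | append_singleton l a ih =>
    intro m p hc
    have hlc : ∀ τ ∈ p.t, τ <+: l → ∀ γ, p.h τ = some γ →
        ((l.length - τ.length + (m + 1) : ℕ) : Ordinal) ≤ γ := by
      intro τ hτ hpre γ hγ
      have hle := hc τ hτ (hpre.trans (List.prefix_append l [a])) γ hγ
      have heq : l.length - τ.length + (m + 1) = (l ++ [a]).length - τ.length + m := by
        have := hpre.length_le
        simp only [List.length_append, List.length_singleton]
        omega
      rw [heq]
      exact hle
    obtain ⟨r', hr'p, hlr', hsub', htag'⟩ := ih (m + 1) p hlc
    by_cases hσr' : (l ++ [a]) ∈ r'.t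
    · have hσp : (l ++ [a]) ∈ p.t := by
        rcases hsub' _ hσr' with h | h
        · exact h
        · exfalso
          have := h.length_le
          simp only [List.length_append, List.length_singleton] at this
          omega
      refine ⟨r', hr'p, hσr',
        fun s hs => (hsub' s hs).imp id (fun h => h.trans (List.prefix_append l [a])), ?_⟩
      rcases hps : p.h (l ++ [a]) with _ | γ
      · exact Or.inl ((hr'p.2 _ hσp).trans hps)
      · refine Or.inr ⟨γ, (hr'p.2 _ hσp).trans hps, ?_⟩
        have := hc _ hσp List.prefix_rfl γ hps
        simpa using this
    · have hdl : (l ++ [a]).dropLast ∈ r'.t := by rwa [List.dropLast_concat]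
      rcases htg : r'.h l with _ | γ'
      · obtain ⟨r, hrr', hrt, hrσ⟩ := exists_insert r' (l ++ [a]) none hσr' (by simp) hdl
          (by rw [List.dropLast_concat, htg]; trivial) (by rintro γ ⟨⟩)
        refine ⟨r, steelLE_trans hrr' hr'p, ?_, ?_, Or.inl hrσ⟩
        · rw [hrt]; exact Finset.mem_insert_self _ _
        · intro s hs
          rw [hrt] at hs
          rcases Finset.mem_insert.mp hs with rfl | hs
          · exact Or.inr List.prefix_rfl
          · exact (hsub' s hs).imp id (fun h => h.trans (List.prefix_append l [a]))
      · have hbd : ((m + 1 : ℕ) : Ordinal) ≤ γ' := by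
          rcases htag' with h | ⟨δ, hδ, hle⟩
          · rw [htg] at h; exact absurd h (by simp)
          · rw [htg] at hδ
            injection hδ with e
            exact e ▸ hle
        have hmγ' : (m : Ordinal) < γ' := by
          have : (m : Ordinal) < ((m + 1 : ℕ) : Ordinal) := by
            rw [Nat.cast_add, Nat.cast_one]
            exact lt_add_one _
          exact this.trans_le hbd
        obtain ⟨r, hrr', hrt, hrσ⟩ := exists_insert r' (l ++ [a]) (some (m : Ordinal)) hσr'
          (by simp) hdl
          (by rw [List.dropLast_concat, htg]; exact hmγ')
          (by rintro γ e; injection e with e; exact e ▸ (hmγ'.trans (r'.tag_lt l hlr' γ' htg)))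
        refine ⟨r, steelLE_trans hrr' hr'p, ?_, ?_, Or.inr ⟨(m : Ordinal), hrσ, le_rfl⟩⟩
        · rw [hrt]; exact Finset.mem_insert_self _ _
        · intro s hs
          rw [hrt] at hs
          rcases Finset.mem_insert.mp hs with rfl | hs
          · exact Or.inr List.prefix_rfl
          · exact (hsub' s hs).imp id (fun h => h.trans (List.prefix_append l [a]))

lemma exists_out_witness {α : Ordinal} (hα : 0 < α) (σ : List ℕ) :
    σ ≠ [] → ∀ p : SteelCond α, σ.dropLast ∉ p.t →
    ∃ (q : SteelCond α) (τ : List ℕ), SteelLE q p ∧ τ ∈ q.t ∧ τ <+: σ ∧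
      τ.length < σ.length ∧ q.h τ = some 0 := by
  induction σ using List.reverseRecOn with
  | nil => intro h; exact absurd rfl h
  | append_singleton l a ih =>
    intro _ p hdp
    rw [List.dropLast_concat] at hdp
    by_cases hl0 : l = []
    · subst hl0
      refine ⟨rootCond (some 0) (by rintro γ e; injection e with e; exact e ▸ hα), [],
        rootCond_le (t_empty hdp) _ _, by simp [rootCond], List.nil_prefix, by simp, rfl⟩
    · by_cases hdl : l.dropLast ∈ p.t
      · by_cases h0 : p.h l.dropLast = some 0
        · refine ⟨p, l.dropLast, steelLE_refl p, hdl,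
            (List.dropLast_prefix l).trans (List.prefix_append l [a]), ?_, h0⟩
          rw [List.length_dropLast]
          simp only [List.length_append, List.length_singleton]
          omega
        · have h1 : TagLT (some 0) (p.h l.dropLast) := by
            rcases hpl : p.h l.dropLast with _ | δ
            · trivial
            · show (0 : Ordinal) < δ
              exact pos_iff_ne_zero.mpr (fun e => h0 (by rw [hpl, e]))
          have hle : l.dropLast = l.dropLast := rfl
          obtain ⟨q, hqp, hqt, hqσ⟩ := exists_insert p l (some 0) hdp hl0 hdl h1
            (by rintro γ e; injection e with e; exact e ▸ hα)
          refine ⟨q, l, hqp, ?_, List.prefix_append l [a], by simp, hqσ⟩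
          rw [hqt]; exact Finset.mem_insert_self _ _
      · obtain ⟨q, τ, hqp, hτ, hpre, hlen, h0⟩ := ih hl0 p hdl
        refine ⟨q, τ, hqp, hτ, hpre.trans (List.prefix_append l [a]), ?_, h0⟩
        simp only [List.length_append, List.length_singleton]
        omega

lemma forcesIn_iff {α : Ordinal} (hα : 0 < α) (p : SteelCond α) (σ : List ℕ) :
    ForcesIn p σ ↔
      (σ = [] ∨ σ ∈ p.t ∨ (σ ≠ [] ∧ σ.dropLast ∈ p.t ∧ p.h σ.dropLast ≠ some 0)) := by
  constructor
  · intro hF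
    by_contra hcon
    push_neg at hcon
    obtain ⟨hne, hσp, h3⟩ := hcon
    by_cases hd : σ.dropLast ∈ p.t
    · have h0 := h3 hne hd
      have hdiff : (0 : Ordinal) < ((σ.length - σ.dropLast.length : ℕ) : Ordinal) := by
        have : σ.length ≠ 0 := fun e => hne (List.length_eq_zero_iff.mp e)
        rw [List.length_dropLast]
        exact_mod_cast Nat.pos_of_ne_zero (by omega)
      have hout : ForcesOut p σ := out_of_tag p σ σ.dropLast hd (List.dropLast_prefix σ) 0 h0 hdiff
      obtain ⟨r, hr, hσr⟩ := hF p (steelLE_refl p)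
      exact hout r hr hσr
    · obtain ⟨q, τ, hqp, hτ, hpre, hlen, h0⟩ := exists_out_witness hα σ hne p hd
      have hout : ForcesOut q σ := out_of_tag q σ τ hτ hpre 0 h0
        (by exact_mod_cast Nat.pos_of_ne_zero (by omega))
      obtain ⟨r, hr, hσr⟩ := hF q hqp
      exact hout r hr hσr
  · rintro (rfl | hσ | ⟨hne, hd, h0⟩) q hq
    · by_cases h0 : [] ∈ q.t
      · exact ⟨q, steelLE_refl q, h0⟩
      · exact ⟨rootCond none (by rintro γ ⟨⟩), rootCond_le (t_empty h0) _ _, by simp [rootCond]⟩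
    · exact ⟨q, steelLE_refl q, hq.1 hσ⟩
    · by_cases hσq : σ ∈ q.t
      · exact ⟨q, steelLE_refl q, hσq⟩
      · have hd' : σ.dropLast ∈ q.t := hq.1 hd
        have h1 : TagLT (some 0) (q.h σ.dropLast) := by
          rw [hq.2 _ hd]
          rcases hpl : p.h σ.dropLast with _ | δ
          · trivial
          · show (0 : Ordinal) < δ
            exact pos_iff_ne_zero.mpr (fun e => h0 (by rw [hpl, e]))
        obtain ⟨r, hrq, hrt, hrσ⟩ := exists_insert q σ (some 0) hσq hne hd' h1
          (by rintro γ e; injection e with e; exact e ▸ hα)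
        exact ⟨r, hrq, by rw [hrt]; exact Finset.mem_insert_self _ _⟩

lemma forcesOut_iff {α : Ordinal} (hα : 0 < α) (p : SteelCond α) (σ : List ℕ) :
    ForcesOut p σ ↔
      ∃ τ : List ℕ, τ ∈ p.t ∧ τ <+: σ ∧ ∃ γ : Ordinal, p.h τ = some γ ∧
        γ < ((σ.length - τ.length : ℕ) : Ordinal) := by
  constructor
  · intro hF
    by_contra hcon
    push_neg at hcon
    have hc : ∀ τ ∈ p.t, τ <+: σ → ∀ γ, p.h τ = some γ →
        ((σ.length - τ.length + 0 : ℕ) : Ordinal) ≤ γ := by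
      intro τ hτ hpre γ hγ
      rw [Nat.add_zero]
      exact hcon τ hτ hpre γ hγ
    obtain ⟨r, hrp, hσr, _, _⟩ := exists_mem_of_compat hα σ 0 p hc
    exact hF r hrp hσr
  · rintro ⟨τ, hτ, hpre, γ, hγ, hlt⟩
    exact out_of_tag p σ τ hτ hpre γ hγ hlt

lemma cut_one_key {α : Ordinal} (p q : SteelCond α) (hc : p.cut 1 = q.cut 1) :
    p.t = q.t ∧ ∀ s ∈ p.t, ∀ γ : Ordinal, γ < Ordinal.omega0 →
      (p.h s = some γ ↔ q.h s = some γ) := by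
  have ht : p.t = q.t := congrArg Prod.fst hc
  refine ⟨ht, fun s hs γ hγ => ?_⟩
  have hh := congrFun (congrArg Prod.snd hc) s
  simp only [SteelCond.cut, mul_one, if_pos hs, if_pos (ht ▸ hs)] at hh
  constructor <;> intro he
  · rw [he] at hh
    simp only [Option.bind_some, if_pos hγ] at hh
    rcases hq : q.h s with _ | δ
    · rw [hq] at hh
      simp at hh
    · rw [hq] at hh
      simp only [Option.bind_some] at hh
      by_cases hδ : δ < Ordinal.omega0
      · rw [if_pos hδ] at hh
        exact hh.symm
      · rw [if_neg hδ] at hh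
        exact absurd hh (by simp)
  · rw [he] at hh
    simp only [Option.bind_some, if_pos hγ] at hh
    rcases hq : p.h s with _ | δ
    · rw [hq] at hh
      simp at hh
    · rw [hq] at hh
      simp only [Option.bind_some] at hh
      by_cases hδ : δ < Ordinal.omega0
      · rw [if_pos hδ] at hh
        exact hh
      · rw [if_neg hδ] at hh
        exact absurd hh.symm (by simp)

/-- Characterization of the atomic forcing relations for the generic tree, and the consequence
that they only depend on `p(1)`: conditions with the same `1`-cut force the same membership
facts (hence the same clopen facts) about the generic tree. -/
theorem steel_atomic_forcing (α : Ordinal) (hα : 0 < α) (p : SteelCond α) :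
    (∀ σ : List ℕ, ForcesIn p σ ↔
      (σ = [] ∨ σ ∈ p.t ∨ (σ ≠ [] ∧ σ.dropLast ∈ p.t ∧ p.h σ.dropLast ≠ some 0))) ∧
    (∀ σ : List ℕ, ForcesOut p σ ↔
      ∃ τ : List ℕ, τ ∈ p.t ∧ τ <+: σ ∧ ∃ γ : Ordinal, p.h τ = some γ ∧
        γ < ((σ.length - τ.length : ℕ) : Ordinal)) ∧
    (∀ q : SteelCond α, p.cut 1 = q.cut 1 →
      ∀ σ : List ℕ, (ForcesIn p σ ↔ ForcesIn q σ) ∧ (ForcesOut p σ ↔ ForcesOut q σ)) := by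
  refine ⟨fun σ => forcesIn_iff hα p σ, fun σ => forcesOut_iff hα p σ, fun q hc σ => ?_⟩
  obtain ⟨ht, key⟩ := cut_one_key p q hc
  constructor
  · rw [forcesIn_iff hα p σ, forcesIn_iff hα q σ]
    constructor
    · rintro (rfl | hσ | ⟨hne, hd, h0⟩)
      · exact Or.inl rfl
      · exact Or.inr (Or.inl (ht ▸ hσ))
      · exact Or.inr (Or.inr ⟨hne, ht ▸ hd,
          fun e => h0 ((key _ hd 0 Ordinal.omega0_pos).mpr e)⟩)
    · rintro (rfl | hσ | ⟨hne, hd, h0⟩)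
      · exact Or.inl rfl
      · exact Or.inr (Or.inl (ht ▸ hσ))
      · have hd' : σ.dropLast ∈ p.t := ht ▸ hd
        exact Or.inr (Or.inr ⟨hne, hd',
          fun e => h0 ((key _ hd' 0 Ordinal.omega0_pos).mp e)⟩)
  · rw [forcesOut_iff hα p σ, forcesOut_iff hα q σ]
    constructor
    · rintro ⟨τ, hτ, hpre, γ, hγ, hlt⟩
      exact ⟨τ, ht ▸ hτ, hpre, γ,
        (key τ hτ γ (hlt.trans (Ordinal.nat_lt_omega0 _))).mp hγ, hlt⟩
    · rintro ⟨τ, hτ, hpre, γ, hγ, hlt⟩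
      have hτ' : τ ∈ p.t := ht ▸ hτ
      exact ⟨τ, hτ', hpre, γ,
        (key τ hτ' γ (hlt.trans (Ordinal.nat_lt_omega0 _))).mpr hγ, hlt⟩
end

section
/- For every countable ordinal α, the set WF_α = {T ⊆ ω^{<ω} : T is a well-founded tree of rank α} is a Borel subset of 2^{ω^{<ω}}. -/
open Cardinal Set

/-- A tree on ω: a set of finite sequences closed under initial segments. -/
def IsTree (T : Set (List ℕ)) : Prop := ∀ s ∈ T, ∀ t : List ℕ, t <+: s → t ∈ T

namespace WFAux

/-- The strict-extension relation on elements of the tree coded by `x`. -/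
abbrev Rel (x : List ℕ → Bool) (a b : {s : List ℕ // x s = true}) : Prop :=
  b.1 <+: a.1 ∧ a.1 ≠ b.1

/-- `s` is in the tree `x`, the tree is a tree, the node `s` is accessible (the subtree above `s`
is well-founded), and its rank is `β`. -/
def P (β : Ordinal) (s : List ℕ) (x : List ℕ → Bool) : Prop :=
  IsTree {t : List ℕ | x t = true} ∧
    ∃ h : x s = true, ∃ ha : Acc (Rel x) ⟨s, h⟩, ha.rank = β

lemma exists_child {x : List ℕ → Bool} (htree : IsTree {t : List ℕ | x t = true})
    {s t : List ℕ} (ht : x t = true) (hpre : s <+: t) (hne : t ≠ s) :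
    ∃ n, x (s ++ [n]) = true ∧ (s ++ [n]) <+: t := by
  obtain ⟨u, rfl⟩ := hpre
  have hu : u ≠ [] := by rintro rfl; simp at hne
  have hp : (s ++ [u.head hu]) <+: s ++ u :=
    (List.prefix_append_right_inj s).mpr ⟨u.tail, List.cons_head_tail hu⟩
  exact ⟨u.head hu, htree _ ht _ hp, hp⟩

lemma rel_child {x : List ℕ → Bool} {s : List ℕ} (h : x s = true) {n : ℕ}
    (hn : x (s ++ [n]) = true) : Rel x ⟨s ++ [n], hn⟩ ⟨s, h⟩ :=
  ⟨⟨[n], rfl⟩, by simp⟩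

lemma acc_of_children {x : List ℕ → Bool} (htree : IsTree {t : List ℕ | x t = true})
    {s : List ℕ} (h : x s = true)
    (H : ∀ n (hn : x (s ++ [n]) = true), Acc (Rel x) ⟨s ++ [n], hn⟩) :
    Acc (Rel x) ⟨s, h⟩ := by
  constructor
  rintro ⟨t, ht⟩ ⟨hpre, hne⟩
  obtain ⟨n, hc, hcp⟩ := exists_child htree ht hpre hne
  rcases eq_or_ne t (s ++ [n]) with rfl | hne2
  · exact H n ht
  · exact (H n hc).inv ⟨hcp, hne2⟩

lemma P_iff (β : Ordinal) (s : List ℕ) (x : List ℕ → Bool) :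
    P β s x ↔ IsTree {t : List ℕ | x t = true} ∧ x s = true ∧
      (∀ n, x (s ++ [n]) = true → ∃ γ, γ < β ∧ P γ (s ++ [n]) x) ∧
      (∀ γ, γ < β → ∃ n δ, γ ≤ δ ∧ δ < β ∧ P δ (s ++ [n]) x) := by
  constructor
  · rintro ⟨htree, h, ha, rfl⟩
    refine ⟨htree, h, ?_, ?_⟩
    · intro n hn
      have hrel := rel_child h hn
      exact ⟨(ha.inv hrel).rank, Acc.rank_lt_of_rel ha hrel, htree, hn, ha.inv hrel, rfl⟩
    · intro γ hγ
      rw [ha.rank_eq, Ordinal.lt_iSup_iff] at hγ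
      obtain ⟨⟨⟨t, ht⟩, hrel⟩, hγ⟩ := hγ
      rw [Order.lt_succ_iff] at hγ
      obtain ⟨n, hc, hcp⟩ := exists_child htree ht hrel.1 hrel.2
      have hrelc := rel_child h hc
      have hac := ha.inv hrelc
      have hrank_le : (ha.inv hrel).rank ≤ hac.rank := by
        rcases eq_or_ne t (s ++ [n]) with heq | hne2
        · subst heq; exact le_rfl
        · exact (Acc.rank_lt_of_rel hac ⟨hcp, hne2⟩).le
      exact ⟨n, hac.rank, hγ.trans hrank_le, Acc.rank_lt_of_rel ha hrelc, htree, hc, hac, rfl⟩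
  · rintro ⟨htree, h, H1, H2⟩
    have Hacc : ∀ n (hn : x (s ++ [n]) = true), Acc (Rel x) ⟨s ++ [n], hn⟩ := by
      intro n hn
      obtain ⟨γ, _, _, h', ha', _⟩ := H1 n hn
      exact ha'
    have ha := acc_of_children htree h Hacc
    refine ⟨htree, h, ha, le_antisymm ?_ ?_⟩
    · rw [ha.rank_eq]
      apply Ordinal.iSup_le
      rintro ⟨⟨t, ht⟩, hrel⟩
      rw [Order.succ_le_iff]
      obtain ⟨n, hc, hcp⟩ := exists_child htree ht hrel.1 hrel.2
      obtain ⟨γ, hγβ, _, h', ha', hrank⟩ := H1 n hc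
      have hle : (ha.inv hrel).rank ≤ γ := by
        rw [← hrank]
        rcases eq_or_ne t (s ++ [n]) with heq | hne2
        · subst heq; exact le_rfl
        · exact (Acc.rank_lt_of_rel ha' ⟨hcp, hne2⟩).le
      exact hle.trans_lt hγβ
    · by_contra hlt
      push_neg at hlt
      obtain ⟨n, δ, hle, hδβ, _, h', ha', hrank⟩ := H2 ha.rank hlt
      have hrel := rel_child h h'
      have hlt2 := Acc.rank_lt_of_rel ha hrel
      rw [show (ha.inv hrel).rank = δ from hrank] at hlt2
      exact absurd (hle.trans_lt hlt2) (lt_irrefl _)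

lemma measurable_coord (s : List ℕ) (b : Bool) :
    MeasurableSet {x : List ℕ → Bool | x s = b} := by
  have h : {x : List ℕ → Bool | x s = b} = (fun x : List ℕ → Bool => x s) ⁻¹' {b} := rfl
  rw [h]
  exact measurable_pi_apply s (measurableSet_singleton b)

lemma measurable_tree : MeasurableSet {x : List ℕ → Bool | IsTree {t : List ℕ | x t = true}} := by
  have key : {x : List ℕ → Bool | IsTree {t : List ℕ | x t = true}} =
      ⋂ (s : List ℕ) (t : List ℕ) (_ : t <+: s),
        ({x : List ℕ → Bool | x s = true}ᶜ ∪ {x : List ℕ → Bool | x t = true}) := by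
    ext x
    simp only [mem_iInter, mem_union, mem_compl_iff, mem_setOf_eq, IsTree]
    constructor
    · intro h s t hts
      by_cases hs : x s = true
      · exact Or.inr (h s hs t hts)
      · exact Or.inl hs
    · intro h s hs t hts
      rcases h s t hts with h' | h'
      · exact absurd hs h'
      · exact h'
  rw [key]
  exact MeasurableSet.iInter fun s => MeasurableSet.iInter fun t => MeasurableSet.iInter fun _ =>
    ((measurable_coord s true).compl.union (measurable_coord t true))

lemma countable_Iio {β : Ordinal} (hβ : β < (Cardinal.aleph 1).ord) : Countable (Iio β) := by
  have h1 : β.card ≤ ℵ₀ := by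
    have h2 := Cardinal.lt_ord.mp hβ
    rwa [← Cardinal.succ_aleph0, Order.lt_succ_iff] at h2
  rw [← Cardinal.mk_le_aleph0_iff, Ordinal.mk_Iio_ordinal]
  exact (Cardinal.lift_le.mpr h1).trans (by simp)

lemma measurable_P : ∀ β : Ordinal, β < (Cardinal.aleph 1).ord → ∀ s : List ℕ,
    MeasurableSet {x : List ℕ → Bool | P β s x} := by
  intro β
  induction β using Ordinal.induction with
  | _ β ih =>
  intro hβ s
  have key : {x : List ℕ → Bool | P β s x} =
      ({x : List ℕ → Bool | IsTree {t : List ℕ | x t = true}} ∩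
        {x : List ℕ → Bool | x s = true}) ∩
      ((⋂ n : ℕ, ({x : List ℕ → Bool | x (s ++ [n]) = true}ᶜ ∪
          ⋃ γ : Iio β, {x : List ℕ → Bool | P γ.1 (s ++ [n]) x})) ∩
       (⋂ γ : Iio β, ⋃ n : ℕ, ⋃ δ : Ico γ.1 β, {x : List ℕ → Bool | P δ.1 (s ++ [n]) x})) := by
    ext x
    simp only [mem_inter_iff, mem_iInter, mem_union, mem_compl_iff, mem_iUnion, mem_setOf_eq,
      Subtype.exists, mem_Iio, mem_Ico, exists_prop]
    rw [P_iff]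
    constructor
    · rintro ⟨h1, h2, h3, h4⟩
      refine ⟨⟨h1, h2⟩, ?_, ?_⟩
      · intro n
        by_cases hn : x (s ++ [n]) = true
        · obtain ⟨γ, hγ, hP⟩ := h3 n hn
          exact Or.inr ⟨γ, hγ, hP⟩
        · exact Or.inl hn
      · rintro ⟨γ, hγ⟩
        obtain ⟨n, δ, h5, h6, h7⟩ := h4 γ hγ
        exact ⟨n, δ, ⟨h5, h6⟩, h7⟩
    · rintro ⟨⟨h1, h2⟩, h3, h4⟩
      refine ⟨h1, h2, ?_, ?_⟩
      · intro n hn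
        rcases h3 n with h | ⟨γ, hγ, hP⟩
        · exact absurd hn h
        · exact ⟨γ, hγ, hP⟩
      · intro γ hγ
        obtain ⟨n, δ, ⟨h5, h6⟩, h7⟩ := h4 ⟨γ, hγ⟩
        exact ⟨n, δ, h5, h6, h7⟩
  rw [key]
  have hcnt : Countable (Iio β) := countable_Iio hβ
  refine (measurable_tree.inter (measurable_coord s true)).inter (MeasurableSet.inter ?_ ?_)
  · refine MeasurableSet.iInter fun n => ((measurable_coord (s ++ [n]) true).compl.union
      (MeasurableSet.iUnion fun γ => ih γ.1 γ.2 (γ.2.trans hβ) (s ++ [n])))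
  · refine MeasurableSet.iInter fun γ => MeasurableSet.iUnion fun n => ?_
    have : Countable (Ico γ.1 β) :=
      (((Set.countable_coe_iff.mp hcnt).mono Set.Ico_subset_Iio_self)).to_subtype
    exact MeasurableSet.iUnion fun δ => ih δ.1 δ.2.2 (δ.2.2.trans hβ) (s ++ [n])

end WFAux

/-- For every countable ordinal α, the set of (characteristic functions of) well-founded trees
`T ⊆ ω^{<ω}` of rank exactly α is a Borel subset of `2^{ω^{<ω}}`.  Well-foundedness is the
well-foundedness of the strict-extension relation, and the rank of the tree is the rank of the
root `⟨⟩` under that relation. -/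
theorem wf_alpha_borel (α : Ordinal) (hα : α < (Cardinal.aleph 1).ord) :
    MeasurableSet {x : List ℕ → Bool |
      IsTree {s : List ℕ | x s = true} ∧
      ∃ hr : x [] = true,
      ∃ hw : WellFounded (fun a b : {s : List ℕ // x s = true} => b.1 <+: a.1 ∧ a.1 ≠ b.1),
        (hw.apply ⟨[], hr⟩).rank = α} := by
  have key : {x : List ℕ → Bool |
      IsTree {s : List ℕ | x s = true} ∧
      ∃ hr : x [] = true,
      ∃ hw : WellFounded (fun a b : {s : List ℕ // x s = true} => b.1 <+: a.1 ∧ a.1 ≠ b.1),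
        (hw.apply ⟨[], hr⟩).rank = α} = {x : List ℕ → Bool | WFAux.P α [] x} := by
    ext x
    simp only [mem_setOf_eq, WFAux.P]
    constructor
    · rintro ⟨htree, hr, hw, hrank⟩
      exact ⟨htree, hr, hw.apply _, hrank⟩
    · rintro ⟨htree, h, ha, hrank⟩
      refine ⟨htree, h, ?_, ?_⟩
      · constructor
        rintro ⟨t, ht⟩
        rcases eq_or_ne t [] with rfl | hne
        · exact ha
        · exact ha.inv ⟨List.nil_prefix, hne⟩
      · exact hrank
  rw [key]
  exact WFAux.measurable_P α hα []
end

section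
/- Any nonmeager subset X ⊆ 2^ω of cardinality ℵ₁ is a union of ℵ₁ closed sets (indeed of ℵ₁ singletons) but is not an intersection of ℵ₁ open sets, provided 2^ω is not the union of ℵ₁ meager sets (e.g., in the Cohen real model). -/
open Cardinal Set
open Topology Filter

lemma aux_nd_meagre {Y : Type*} [TopologicalSpace Y] {s : Set Y} (h : IsNowhereDense s) :
    IsMeagre s := by
  rw [isMeagre_iff_countable_union_isNowhereDense]
  exact ⟨{s}, by simpa using h, countable_singleton _, by simp⟩

lemma aux_nd_image {Y Z : Type*} [TopologicalSpace Y] [TopologicalSpace Z] (e : Y ≃ₜ Z)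
    {s : Set Y} (h : IsNowhereDense s) : IsNowhereDense (e '' s) := by
  unfold IsNowhereDense at *
  rw [← e.image_closure, ← e.image_interior, h, image_empty]

lemma aux_mkW1 : #W1 = Cardinal.aleph 1 := by
  rw [Cardinal.mk_toType, Cardinal.card_ord]

/-- xor with a fixed element, as a homeomorphism of Cantor space. -/
def xorHomeo (t : CantorSp) : CantorSp ≃ₜ CantorSp where
  toFun x := fun n => xor (x n) (t n)
  invFun x := fun n => xor (x n) (t n)
  left_inv x := funext fun n => show xor (xor (x n) (t n)) (t n) = x n by
    cases x n <;> cases t n <;> rfl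
  right_inv x := funext fun n => show xor (xor (x n) (t n)) (t n) = x n by
    cases x n <;> cases t n <;> rfl
  continuous_toFun := continuous_pi fun n =>
    (continuous_of_discreteTopology (f := fun b => xor b (t n))).comp (continuous_apply n)
  continuous_invFun := continuous_pi fun n =>
    (continuous_of_discreteTopology (f := fun b => xor b (t n))).comp (continuous_apply n)

lemma xorHomeo_invol (t : CantorSp) (x : CantorSp) : xorHomeo t (xorHomeo t x) = x :=
  (xorHomeo t).left_inv x

lemma aux_not_open_singleton (x : CantorSp) : ¬ IsOpen ({x} : Set CantorSp) := by
  intro h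
  have hmem : ({x} : Set CantorSp) ∈ 𝓝 x := h.mem_nhds rfl
  rw [nhds_pi, Filter.mem_pi] at hmem
  obtain ⟨I, hIfin, t, ht, hsub⟩ := hmem
  obtain ⟨k, hk⟩ := hIfin.infinite_compl.nonempty
  set y : CantorSp := Function.update x k (!(x k)) with hy
  have hyI : y ∈ I.pi t := by
    intro i hi
    have hik : i ≠ k := fun h' => hk (h' ▸ hi)
    have : y i = x i := Function.update_of_ne hik _ _
    rw [this]
    exact mem_of_mem_nhds (ht i)
  have : y = x := hsub hyI
  have : y k = x k := congrFun this k
  simp [hy, Function.update_self] at this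

lemma aux_meagre_singleton (x : CantorSp) : IsMeagre ({x} : Set CantorSp) := by
  apply aux_nd_meagre
  rw [IsClosed.isNowhereDense_iff isClosed_singleton]
  by_contra h
  obtain ⟨z, hz⟩ := nonempty_iff_ne_empty.mpr h
  have hsub : interior ({x} : Set CantorSp) ⊆ {x} := interior_subset
  have : interior ({x} : Set CantorSp) = {x} := by
    rcases (Set.subset_singleton_iff_eq).mp hsub with h' | h'
    · rw [h'] at hz; exact absurd hz (notMem_empty z)
    · exact h'
  exact aux_not_open_singleton x (this ▸ isOpen_interior)

/-- If Cantor space is not a union of ℵ₁ meager sets (as in the Cohen real model), then every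
nonmeager set of size ℵ₁ is a union of ℵ₁ closed sets but not an intersection of ℵ₁ open
sets. -/
theorem nonmeager_sigma_not_pi
    (hcov : ¬ ∃ A : W1 → Set CantorSp, (∀ i, IsMeagre (A i)) ∧ ⋃ i, A i = Set.univ)
    (X : Set CantorSp) (hX : ¬ IsMeagre X) (hcard : #X = Cardinal.aleph 1) :
    (∃ A : W1 → Set CantorSp, (∀ i, IsClosed (A i)) ∧ X = ⋃ i, A i) ∧
    ¬ ∃ A : W1 → Set CantorSp, (∀ i, IsOpen (A i)) ∧ X = ⋂ i, A i := by
  have hW1 : Nonempty W1 := by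
    rw [← Cardinal.mk_ne_zero_iff, aux_mkW1]
    exact (aleph0_pos.trans_le (aleph0_le_aleph 1)).ne'
  obtain ⟨e⟩ : Nonempty (↥X ≃ W1) := Cardinal.eq.mp (hcard.trans aux_mkW1.symm)
  constructor
  · refine ⟨fun i => {(e.symm i : CantorSp)}, fun i => isClosed_singleton, ?_⟩
    apply Set.eq_of_subset_of_subset
    · intro y hy
      exact mem_iUnion.2 ⟨e ⟨y, hy⟩, by simp⟩
    · intro y hy
      obtain ⟨i, hi⟩ := mem_iUnion.1 hy
      rw [mem_singleton_iff] at hi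
      exact hi ▸ (e.symm i).2
  · rintro ⟨U, hUopen, hXU⟩
    -- X is not nowhere dense, so closure X has nonempty interior
    have hnd : interior (closure X) ≠ ∅ := fun h => hX (aux_nd_meagre h)
    obtain ⟨x₀, hx₀⟩ := nonempty_iff_ne_empty.mpr hnd
    have hmem : interior (closure X) ∈ 𝓝 x₀ := isOpen_interior.mem_nhds hx₀
    rw [nhds_pi, Filter.mem_pi] at hmem
    obtain ⟨I, hIfin, t, ht, hsub⟩ := hmem
    obtain ⟨n, hn⟩ := hIfin.bddAbove
    set N := n + 1 with hN
    set V : Set CantorSp := {y | ∀ k, k < N → y k = x₀ k} with hV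
    have hVsub : V ⊆ interior (closure X) := by
      intro y hy
      apply hsub
      intro i hi
      have : y i = x₀ i := hy i (Nat.lt_succ_of_le (hn hi))
      rw [this]
      exact mem_of_mem_nhds (ht i)
    have hVclosed : IsClosed V := by
      have : V = ⋂ k ∈ Finset.range N, (fun y : CantorSp => y k) ⁻¹' {x₀ k} := by
        ext y; simp [hV]
      rw [this]
      exact isClosed_biInter fun k _ => IsClosed.preimage (continuous_apply k) isClosed_singleton
    -- X is dense in V
    have hdense : ∀ O : Set CantorSp, IsOpen O → O ⊆ V → O.Nonempty → (O ∩ X).Nonempty := by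
      rintro O hO hOV ⟨z, hz⟩
      have hzc : z ∈ closure X := interior_subset (hVsub (hOV hz))
      exact mem_closure_iff.mp hzc O hO hz
    -- each (U i)ᶜ ∩ V is nowhere dense
    have hndC : ∀ i, IsNowhereDense ((U i)ᶜ ∩ V) := by
      intro i
      rw [IsClosed.isNowhereDense_iff (((hUopen i).isClosed_compl).inter hVclosed)]
      by_contra h
      obtain ⟨z, hz⟩ := nonempty_iff_ne_empty.mpr h
      obtain ⟨w, hwO, hwX⟩ := hdense _ isOpen_interior
        (interior_subset.trans inter_subset_right) ⟨z, hz⟩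
      have hwU : w ∈ U i := by
        have : w ∈ ⋂ j, U j := hXU ▸ hwX
        exact mem_iInter.mp this i
      exact (interior_subset hwO).1 hwU
    -- translations
    set ts : (Fin N → Bool) → CantorSp := fun s k => if h : k < N then s ⟨k, h⟩ else false with hts
    set es : (Fin N → Bool) → CantorSp ≃ₜ CantorSp := fun s => xorHomeo (ts s) with hes
    -- meager pieces
    set M : (Fin N → Bool) × (↥X ⊕ W1) → Set CantorSp := fun p =>
      Sum.elim (fun x : ↥X => {es p.1 ↑x}) (fun i : W1 => es p.1 '' ((U i)ᶜ ∩ V)) p.2 with hM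
    have hMmeagre : ∀ p, IsMeagre (M p) := by
      rintro ⟨s, x | i⟩
      · exact aux_meagre_singleton _
      · exact aux_nd_meagre (aux_nd_image (es s) (hndC i))
    have hcover : ∀ y : CantorSp, ∃ p, y ∈ M p := by
      intro y
      set s : Fin N → Bool := fun k => xor (y k) (x₀ k) with hs
      set z : CantorSp := es s y with hz
      have hzV : z ∈ V := by
        intro k hk
        show xor (y k) (ts s k) = x₀ k
        rw [hts]
        simp only [hk, dif_pos, hs]
        cases y k <;> cases x₀ k <;> rfl
      have hyz : es s z = y := xorHomeo_invol _ _
      by_cases hzX : z ∈ X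
      · exact ⟨(s, Sum.inl ⟨z, hzX⟩), hyz.symm⟩
      · obtain ⟨i, hi⟩ : ∃ i, z ∉ U i := by
          by_contra h
          push_neg at h
          exact hzX (hXU ▸ mem_iInter.mpr h)
        exact ⟨(s, Sum.inr i), ⟨z, ⟨hi, hzV⟩, hyz⟩⟩
    -- cardinality
    have hmk : #((Fin N → Bool) × (↥X ⊕ W1)) ≤ Cardinal.aleph 1 := by
      simp only [Cardinal.mk_prod, Cardinal.mk_sum, Cardinal.lift_id, hcard, aux_mkW1]
      rw [Cardinal.add_eq_self (aleph0_le_aleph 1)]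
      calc #(Fin N → Bool) * aleph 1 ≤ max (max (#(Fin N → Bool)) (aleph 1)) ℵ₀ :=
            Cardinal.mul_le_max _ _
        _ ≤ aleph 1 := by
            apply max_le (max_le _ le_rfl) (aleph0_le_aleph 1)
            exact ((Cardinal.lt_aleph0_of_finite _).le).trans (aleph0_le_aleph 1)
    obtain ⟨f⟩ : Nonempty ((Fin N → Bool) × (↥X ⊕ W1) ↪ W1) :=
      Cardinal.le_def _ _ |>.mp (hmk.trans_eq aux_mkW1.symm)
    have hne : Nonempty ((Fin N → Bool) × (↥X ⊕ W1)) := ⟨⟨fun _ => false, Sum.inr hW1.some⟩⟩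
    apply hcov
    refine ⟨fun j => M (Function.invFun f j), fun j => hMmeagre _, ?_⟩
    rw [Set.eq_univ_iff_forall]
    intro y
    obtain ⟨p, hp⟩ := hcover y
    refine mem_iUnion.2 ⟨f p, ?_⟩
    rw [Function.leftInverse_invFun f.injective p]
    exact hp
end
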